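/- Let X be a real Hilbert space and let T : X → X. Then T is nonexpansive if and only if T is the resolvent of a maximally (−1/2)-comonotone operator A : X ⇉ X, i.e., T = J_A = (Id + A)⁻¹ for some maximally (−1/2)-comonotone A. -/
import Mathlib


open RealInnerProductSpace

variable {X : Type*} [NormedAddCommGroup X] [InnerProductSpace ℝ X] [CompleteSpace X]

/-- `A` is `ρ`-comonotone. -/
def Comonotone (ρ : ℝ) (A : X → Set X) : Prop :=
  ∀ ⦃x u y v : X⦄, u ∈ A x → v ∈ A y → ρ * ‖u - v‖ ^ 2 ≤ ⟪x - y, u - v⟫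

/-- `A` is maximally `ρ`-comonotone. -/
def MaxComonotone (ρ : ℝ) (A : X → Set X) : Prop :=
  Comonotone ρ A ∧ ∀ B : X → Set X, Comonotone ρ B → (∀ x, A x ⊆ B x) → ∀ x, B x ⊆ A x

/-- `T` is nonexpansive. -/
def Nonexpansive (T : X → X) : Prop := ∀ x y : X, ‖T x - T y‖ ≤ ‖x - y‖

theorem stmt12 (T : X → X) :
    Nonexpansive T ↔
      ∃ A : X → Set X, MaxComonotone (-(1 / 2)) A ∧
        ∀ x u : X, T x = u ↔ x - u ∈ A u := by
  constructor
  · intro hT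
    refine ⟨fun u => {w | T (u + w) = u}, ⟨?_, ?_⟩, ?_⟩
    · intro x u y v hu hv
      simp only [Set.mem_setOf_eq] at hu hv
      have h := hT (x + u) (y + v)
      rw [hu, hv] at h
      have heq : (x + u) - (y + v) = (x - y) + (u - v) := by abel
      rw [heq] at h
      have hsq := norm_add_sq_real (x - y) (u - v)
      nlinarith [norm_nonneg (x - y), norm_nonneg ((x - y) + (u - v))]
    · intro B hB hAB x w hw
      set z := x + w with hz
      have hu : z - T z ∈ B (T z) := by
        apply hAB
        simp [Set.mem_setOf_eq, add_sub_cancel]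
      have hcomb := hB hw hu
      have heq : w - (z - T z) = T z - x := by rw [hz]; abel
      rw [heq] at hcomb
      have hinner : ⟪x - T z, T z - x⟫ = -‖T z - x‖ ^ 2 := by
        have : x - T z = -(T z - x) := by abel
        rw [this, inner_neg_left, real_inner_self_eq_norm_sq]
      rw [hinner] at hcomb
      have hzero : ‖T z - x‖ = 0 := by nlinarith [norm_nonneg (T z - x)]
      have hxz : T z = x := sub_eq_zero.mp (norm_eq_zero.mp hzero)
      show T (x + w) = x
      rw [← hz, hxz]
    · intro x u
      simp [Set.mem_setOf_eq, add_sub_cancel]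
  · rintro ⟨A, ⟨hA, _⟩, hres⟩ x y
    have h1 := (hres x (T x)).mp rfl
    have h2 := (hres y (T y)).mp rfl
    have hcomb := hA h1 h2
    have hsq := norm_add_sq_real (T x - T y) ((x - T x) - (y - T y))
    have heq : (T x - T y) + ((x - T x) - (y - T y)) = x - y := by abel
    rw [heq] at hsq
    nlinarith [norm_nonneg (T x - T y), norm_nonneg (x - y)]
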